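/- arXiv:1603.05548 — 2 statements merged into one kernel-verified Lean document; each statement's English description precedes it below -/
import Mathlib

section
/- Let f : X → Y be a homeomorphism between metric spaces and assume Y is geodesic. Then for every p ∈ X and every r > 0 such that the set {q ∈ X : d(p,q) ≥ r} is nonempty, the sphere {q ∈ X : d(p,q) = r} is nonempty and inf{d(f(p),f(q)) : d(p,q) ≥ r} = inf{d(f(p),f(q)) : d(p,q) = r}. -/
open Metric Filter Topology ENNReal

/-- A metric space is geodesic if any two points are joined by a continuous path along
which the triangle inequality is an equality. -/
def IsGeodesicSpace (Y : Type*) [MetricSpace Y] : Prop :=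
  ∀ y y' : Y, ∃ γ : ℝ → Y, ContinuousOn γ (Set.Icc 0 1) ∧ γ 0 = y ∧ γ 1 = y' ∧
    ∀ t ∈ Set.Icc (0 : ℝ) 1, dist y (γ t) + dist (γ t) y' = dist y y'

/-- The claim at the start of the proof of Corollary 3.7: for a homeomorphism `f : X → Y`
with `Y` geodesic, if `{q : d(p,q) ≥ r}` is nonempty then the sphere `{q : d(p,q) = r}` is
nonempty and `inf {d(f p, f q) : d(p,q) ≥ r} = inf {d(f p, f q) : d(p,q) = r}`. -/
theorem sphere_nonempty_and_inf_eq {X Y : Type*} [MetricSpace X] [MetricSpace Y]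
    (f : X ≃ₜ Y) (hY : IsGeodesicSpace Y) (p : X) (r : ℝ) (hr : 0 < r)
    (hne : {q : X | r ≤ dist p q}.Nonempty) :
    (Metric.sphere p r).Nonempty ∧
      (⨅ q ∈ {q : X | r ≤ dist p q}, edist (f p) (f q)) =
        ⨅ q ∈ Metric.sphere p r, edist (f p) (f q) := by
  have key : ∀ q : X, r ≤ dist p q →
      ∃ q' : X, dist p q' = r ∧ edist (f p) (f q') ≤ edist (f p) (f q) := by
    intro q hq
    obtain ⟨γ, hγc, hγ0, hγ1, hγd⟩ := hY (f p) (f q)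
    set g : ℝ → X := fun t => f.symm (γ t) with hg
    have hgc : ContinuousOn g (Set.Icc 0 1) :=
      f.symm.continuous.comp_continuousOn hγc
    have hg0 : g 0 = p := by simp [hg, hγ0]
    have hg1 : g 1 = q := by simp [hg, hγ1]
    have hhc : ContinuousOn (fun t => dist p (g t)) (Set.Icc 0 1) :=
      (continuous_dist.comp (Continuous.prodMk_right p)).comp_continuousOn hgc
    have hmem : r ∈ Set.Icc (dist p (g 0)) (dist p (g 1)) := by
      rw [hg0, hg1]; simp [dist_self, hr.le, hq]
    obtain ⟨t, ht, hht⟩ := intermediate_value_Icc (by norm_num : (0:ℝ) ≤ 1) hhc hmem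
    refine ⟨g t, hht, ?_⟩
    have hfg : f (g t) = γ t := f.apply_symm_apply (γ t)
    rw [hfg, edist_dist, edist_dist]
    apply ENNReal.ofReal_le_ofReal
    have := hγd t ht
    have h2 := dist_nonneg (x := γ t) (y := f q)
    linarith
  obtain ⟨q0, hq0⟩ := hne
  obtain ⟨q0', hq0', -⟩ := key q0 hq0
  have hsph : q0' ∈ Metric.sphere p r := by
    simpa [Metric.mem_sphere, dist_comm] using hq0'
  refine ⟨⟨q0', hsph⟩, le_antisymm ?_ ?_⟩
  · refine le_iInf₂ fun q hq => ?_
    have heq : dist p q = r := by simpa [Metric.mem_sphere, dist_comm] using hq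
    exact iInf₂_le q heq.ge
  · refine le_iInf₂ fun q hq => ?_
    obtain ⟨q', hq', hle⟩ := key q hq
    have hmem : q' ∈ Metric.sphere p r := by
      simpa [Metric.mem_sphere, dist_comm] using hq'
    exact le_trans (iInf₂_le q' hmem) hle
end

section
/- Let X be a proper metric space (closed bounded sets are compact), Y a metric space, f : X → Y a continuous map, and p ∈ X. Then, with sup ∅ = 0 and values in [0,∞], liminf_{r→0⁺} ( sup{d(f(p),f(q)) : d(p,q) ≤ r} / r ) ≤ limsup_{r→0⁺} ( sup{d(f(p),f(q)) : d(p,q) = r} / r ). -/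
open Metric Filter Topology ENNReal

/-- The inequality `underline-L_f(p) ≤ overline-L^=_f(p)` from the proof of Lemma 3.5:
for a continuous map `f` on a proper metric space `X`,
`liminf_{r→0⁺} sup{d(f p, f q) : d(p,q) ≤ r}/r ≤ limsup_{r→0⁺} sup{d(f p, f q) : d(p,q) = r}/r`
(in `[0,∞]`, with `sup ∅ = 0`). -/
theorem liminf_ball_le_limsup_sphere {X Y : Type*} [MetricSpace X] [ProperSpace X]
    [MetricSpace Y] (f : X → Y) (hf : Continuous f) (p : X) :
    Filter.liminf (fun r : ℝ =>
        (⨆ q ∈ Metric.closedBall p r, edist (f p) (f q)) / ENNReal.ofReal r)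
        (𝓝[>] (0 : ℝ)) ≤
      Filter.limsup (fun r : ℝ =>
        (⨆ q ∈ Metric.sphere p r, edist (f p) (f q)) / ENNReal.ofReal r)
        (𝓝[>] (0 : ℝ)) := by
  by_contra hcon
  push_neg at hcon
  obtain ⟨c, hc1, hc2⟩ := exists_between hcon
  have hc0 : 0 < c := lt_of_le_of_lt zero_le hc1
  have hev : ∀ᶠ s in 𝓝[>] (0:ℝ),
      (⨆ q ∈ Metric.sphere p s, edist (f p) (f q)) / ENNReal.ofReal s < c :=
    Filter.eventually_lt_of_limsup_lt hc1
  rw [Filter.eventually_iff, mem_nhdsGT_iff_exists_Ioc_subset] at hev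
  obtain ⟨ε, hε, hIoc⟩ := hev
  have hε0 : (0:ℝ) < ε := hε
  have hev2 : ∀ᶠ r in 𝓝[>] (0:ℝ),
      c < (⨆ q ∈ Metric.closedBall p r, edist (f p) (f q)) / ENNReal.ofReal r :=
    Filter.eventually_lt_of_lt_liminf hc2
  have hmem : Set.Ioc (0:ℝ) ε ∈ 𝓝[>] (0:ℝ) :=
    Ioc_mem_nhdsGT_of_mem ⟨le_rfl, hε0⟩
  obtain ⟨r, hgr, hr0, hrε⟩ := (hev2.and (Filter.eventually_of_mem hmem (fun _ h => h))).exists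
  -- maximize on the closed ball
  obtain ⟨q₀, hq₀, hmax'⟩ :=
    (isCompact_closedBall p r).exists_isMaxOn ⟨p, mem_closedBall_self hr0.le⟩
      ((continuous_const.edist hf).continuousOn :
        ContinuousOn (fun q => edist (f p) (f q)) (Metric.closedBall p r))
  have hmax : ∀ q ∈ Metric.closedBall p r, edist (f p) (f q) ≤ edist (f p) (f q₀) :=
    fun q hq => hmax' hq
  have hsup_le : (⨆ q ∈ Metric.closedBall p r, edist (f p) (f q)) ≤ edist (f p) (f q₀) :=
    iSup₂_le hmax
  have hofr0 : ENNReal.ofReal r ≠ 0 := by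
    simp [ENNReal.ofReal_eq_zero, not_le, hr0]
  have hgr' : c * ENNReal.ofReal r <
      (⨆ q ∈ Metric.closedBall p r, edist (f p) (f q)) :=
    (ENNReal.lt_div_iff_mul_lt (Or.inl hofr0) (Or.inl ENNReal.ofReal_ne_top)).mp hgr
  have hq' : c * ENNReal.ofReal r < edist (f p) (f q₀) := lt_of_lt_of_le hgr' hsup_le
  set s := dist p q₀ with hs
  have hs_le : s ≤ r := by rw [hs, dist_comm]; exact mem_closedBall.mp hq₀
  have hs0 : 0 < s := by
    rcases lt_or_eq_of_le (dist_nonneg : (0:ℝ) ≤ dist p q₀) with h | h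
    · exact h
    · exfalso
      have hq₀p : q₀ = p := by
        have : dist p q₀ = 0 := h.symm
        simpa [eq_comm] using dist_eq_zero.mp this
      rw [hq₀p] at hq'
      simp at hq'
  have hsphere : q₀ ∈ Metric.sphere p s := by
    simp [Metric.mem_sphere, hs, dist_comm]
  have hle_sup : edist (f p) (f q₀) ≤ ⨆ q ∈ Metric.sphere p s, edist (f p) (f q) :=
    le_iSup₂ (f := fun q _ => edist (f p) (f q)) q₀ hsphere
  have hofs0 : ENNReal.ofReal s ≠ 0 := by
    simp [ENNReal.ofReal_eq_zero, not_le, hs0]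
  have hlt : c < (⨆ q ∈ Metric.sphere p s, edist (f p) (f q)) / ENNReal.ofReal s := by
    rw [ENNReal.lt_div_iff_mul_lt (Or.inl hofs0) (Or.inl ENNReal.ofReal_ne_top)]
    calc c * ENNReal.ofReal s ≤ c * ENNReal.ofReal r := by
          exact mul_le_mul_right (ENNReal.ofReal_le_ofReal hs_le) c
      _ < edist (f p) (f q₀) := hq'
      _ ≤ _ := hle_sup
  exact absurd (hIoc ⟨hs0, hs_le.trans hrε⟩) (not_lt.mpr hlt.le)
end
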